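/- The gross profit function GP(x̃) = (aβ/(1+a))·x̃ for x̃ ≤ x and (aβ/(1+a))·x(x/x̃)^a for x̃ > x is continuous on (0,∞), attains its maximum value aβx/(1+a) uniquely at x̃ = x, is strictly increasing on (0, x] and strictly decreasing on [x, ∞), and tends to 0 as x̃ → ∞. -/

import Mathlib

open Filter

theorem gross_profit_shape (a β x : ℝ) (ha : 0 < a)
    (hβ : β ∈ Set.Ioc (0 : ℝ) 1) (hx : 0 < x) :
    ContinuousOn
      (fun x' : ℝ => if x' ≤ x then a * β / (1 + a) * x'
        else a * β / (1 + a) * x * (x / x') ^ a) (Set.Ioi 0) ∧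
    (if x ≤ x then a * β / (1 + a) * x else a * β / (1 + a) * x * (x / x) ^ a)
      = a * β * x / (1 + a) ∧
    (∀ x' : ℝ, 0 < x' → x' ≠ x →
      (if x' ≤ x then a * β / (1 + a) * x'
        else a * β / (1 + a) * x * (x / x') ^ a) < a * β * x / (1 + a)) ∧
    StrictMonoOn
      (fun x' : ℝ => if x' ≤ x then a * β / (1 + a) * x'
        else a * β / (1 + a) * x * (x / x') ^ a) (Set.Ioc 0 x) ∧
    StrictAntiOn
      (fun x' : ℝ => if x' ≤ x then a * β / (1 + a) * x'
        else a * β / (1 + a) * x * (x / x') ^ a) (Set.Ici x) ∧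
    Tendsto
      (fun x' : ℝ => if x' ≤ x then a * β / (1 + a) * x'
        else a * β / (1 + a) * x * (x / x') ^ a) atTop (nhds 0) := by
  obtain ⟨hβ0, hβ1⟩ := hβ
  have ha1 : (0:ℝ) < 1 + a := by linarith
  have hc : 0 < a * β / (1 + a) := by positivity
  set c := a * β / (1 + a) with hcdef
  -- on Ici x, the function equals c * x * (x/·)^a
  have hIci : ∀ u : ℝ, x ≤ u →
      (if u ≤ x then c * u else c * x * (x / u) ^ a) = c * x * (x / u) ^ a := by
    intro u hu
    rcases eq_or_lt_of_le hu with h | h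
    · subst h
      rw [if_pos le_rfl, div_self hx.ne', Real.one_rpow, mul_one]
    · rw [if_neg (not_le.mpr h)]
  refine ⟨?_, ?_, ?_, ?_, ?_, ?_⟩
  · -- continuity
    have heq : ∀ u ∈ Set.Ioi (0:ℝ),
        (if u ≤ x then c * u else c * x * (x / u) ^ a)
          = c * min u (x * (x / u) ^ a) := by
      intro u hu
      simp only [Set.mem_Ioi] at hu
      by_cases h : u ≤ x
      · have h1 : (1:ℝ) ≤ x / u := (one_le_div hu).mpr h
        have h2 : (1:ℝ) ≤ (x / u) ^ a := Real.one_le_rpow h1 ha.le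
        have h3 : u ≤ x * (x / u) ^ a := by nlinarith
        rw [if_pos h, min_eq_left h3]
      · push_neg at h
        have h1 : x / u < 1 := (div_lt_one (hx.trans h)).mpr h
        have h2 : (x / u) ^ a < 1 :=
          Real.rpow_lt_one (by positivity) h1 ha
        have h3 : x * (x / u) ^ a ≤ u := by nlinarith
        rw [if_neg (not_le.mpr h), min_eq_right h3, mul_assoc]
    refine ContinuousOn.congr ?_ heq
    have hg : ContinuousOn (fun u : ℝ => x * (x / u) ^ a) (Set.Ioi 0) := by
      refine continuousOn_const.mul (ContinuousOn.rpow_const ?_ ?_)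
      · exact continuousOn_const.div continuousOn_id fun u hu => ne_of_gt hu
      · intro u hu
        exact Or.inl (ne_of_gt (div_pos hx hu))
    exact continuousOn_const.mul
      (ContinuousOn.inf continuousOn_id hg)
  · rw [if_pos le_rfl]; ring
  · intro u hu hne
    have hgoal : a * β * x / (1 + a) = c * x := by ring
    rw [hgoal]
    by_cases h : u ≤ x
    · rw [if_pos h]
      exact mul_lt_mul_of_pos_left (lt_of_le_of_ne h hne) hc
    · push_neg at h
      rw [if_neg (not_le.mpr h)]
      have h1 : x / u < 1 := (div_lt_one (hx.trans h)).mpr h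
      have h2 : (x / u) ^ a < 1 := Real.rpow_lt_one (by positivity) h1 ha
      calc c * x * (x / u) ^ a < c * x * 1 := by
            exact mul_lt_mul_of_pos_left h2 (by positivity)
        _ = c * x := by ring
  · intro u hu v hv huv
    simp only [Set.mem_Ioc] at hu hv
    simp only [if_pos hu.2, if_pos hv.2]
    exact mul_lt_mul_of_pos_left huv hc
  · intro u hu v hv huv
    simp only [Set.mem_Ici] at hu hv
    simp only [hIci u hu, hIci v hv]
    have h0u : 0 < u := hx.trans_le hu
    have h0v : 0 < v := h0u.trans huv
    have h1 : x / v < x / u := div_lt_div_of_pos_left hx h0u huv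
    have h2 : (x / v) ^ a < (x / u) ^ a :=
      Real.rpow_lt_rpow (div_nonneg hx.le h0v.le) h1 ha
    exact mul_lt_mul_of_pos_left h2 (by positivity)
  · have hev : ∀ᶠ u in atTop, c * x * (x / u) ^ a
        = (if u ≤ x then c * u else c * x * (x / u) ^ a) := by
      filter_upwards [eventually_ge_atTop x] with u hu
      exact (hIci u hu).symm
    refine Tendsto.congr' hev ?_
    have h1 : Tendsto (fun u : ℝ => (x / u) ^ a) atTop (nhds 0) := by
      have hd : Tendsto (fun u : ℝ => x / u) atTop (nhds 0) :=
        tendsto_const_nhds.div_atTop tendsto_id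
      have hge : (fun u : ℝ => |x / u| ^ a) =ᶠ[atTop] fun u => (x / u) ^ a := by
        filter_upwards [eventually_gt_atTop 0] with u hu
        rw [abs_of_nonneg (div_pos hx hu).le]
      refine Tendsto.congr' hge ?_
      have habs : Tendsto (fun u : ℝ => |x / u|) atTop (nhds 0) := by
        simpa using hd.abs
      have hcont := (Real.continuousAt_rpow_const 0 a (Or.inr ha.le)).tendsto
      rw [Real.zero_rpow ha.ne'] at hcont
      exact hcont.comp habs
    have := h1.const_mul (c * x)
    simpa using this
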